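/- Let J be a nonempty finite index set, let A_j > 0 and p_j > 0 for each j ∈ J, and let K > 0 satisfy Σ_{j∈J} A_j K^{−p_j} = 1. Then max_{j∈J} A_j^{1/p_j} ≤ K ≤ Σ_{j∈J} (|J| · A_j)^{1/p_j}. -/
import Mathlib


/-- **Bounds on the implicit rate.** If `K > 0` solves `∑ j, A j * K ^ (-(p j)) = 1`
with all `A j, p j > 0` over a nonempty finite index set `J`, then
`max_j (A j) ^ (1 / p j) ≤ K ≤ ∑ j, (|J| * A j) ^ (1 / p j)`. -/
theorem implicit_rate_bounds
    {J : Type*} [Fintype J] [Nonempty J]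
    (A p : J → ℝ) (hA : ∀ j, 0 < A j) (hp : ∀ j, 0 < p j)
    (K : ℝ) (hK : 0 < K) (hKeq : ∑ j, A j * K ^ (-(p j)) = 1) :
    (∀ j, A j ^ (1 / p j) ≤ K) ∧
      K ≤ ∑ j, ((Fintype.card J : ℝ) * A j) ^ (1 / p j) := by
  have hterm : ∀ j, 0 < A j * K ^ (-(p j)) := fun j =>
    mul_pos (hA j) (Real.rpow_pos_of_pos hK _)
  have hKp : ∀ j, (0:ℝ) < K ^ (p j) := fun j => Real.rpow_pos_of_pos hK _
  have hneg : ∀ j, K ^ (-(p j)) = (K ^ (p j))⁻¹ := fun j => Real.rpow_neg hK.le _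
  have hroot : ∀ j, (K ^ p j) ^ (1 / p j) = K := by
    intro j
    rw [← Real.rpow_mul hK.le, mul_one_div, div_self (hp j).ne', Real.rpow_one]
  constructor
  · intro j
    have h : A j * K ^ (-(p j)) ≤ 1 := by
      rw [← hKeq]
      exact Finset.single_le_sum (fun i _ => (hterm i).le) (Finset.mem_univ j)
    have h2 : A j ≤ K ^ (p j) := by
      rw [hneg j] at h
      have h3 := mul_le_mul_of_nonneg_right h (hKp j).le
      rwa [one_mul, mul_assoc, inv_mul_cancel₀ (hKp j).ne', mul_one] at h3
    calc A j ^ (1 / p j) ≤ (K ^ p j) ^ (1 / p j) :=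
          Real.rpow_le_rpow (hA j).le h2 (by have := hp j; positivity)
      _ = K := hroot j
  · set n : ℝ := (Fintype.card J : ℝ) with hn_def
    have hn : 0 < n := by positivity
    obtain ⟨j, -, hj⟩ : ∃ j ∈ Finset.univ, (1:ℝ)/n ≤ A j * K ^ (-(p j)) := by
      apply Finset.exists_le_of_sum_le Finset.univ_nonempty
      rw [hKeq, Finset.sum_const, nsmul_eq_mul]
      simp [n, mul_one_div, div_self hn.ne']
    have h2 : K ^ p j ≤ n * A j := by
      have h3 := mul_le_mul_of_nonneg_left hj (hKp j).le
      rw [hneg j] at h3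
      have h4 : K ^ p j * (A j * (K ^ p j)⁻¹) = A j := by
        field_simp
      rw [h4, mul_one_div, div_le_iff₀ hn] at h3
      linarith [mul_comm (A j) n]
    have hK1 : K ≤ (n * A j) ^ (1 / p j) := by
      calc K = (K ^ p j) ^ (1 / p j) := (hroot j).symm
        _ ≤ (n * A j) ^ (1 / p j) :=
            Real.rpow_le_rpow (hKp j).le h2 (by have := hp j; positivity)
    refine hK1.trans (Finset.single_le_sum (f := fun i => (n * A i) ^ (1 / p i))
      (fun i _ => Real.rpow_nonneg (mul_pos hn (hA i)).le _) (Finset.mem_univ j))
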